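/- For a planar convex body D of constant width and a point v outside D, pdist(v, D) > diam(D). -/

import Mathlib

open MeasureTheory Real Set

noncomputable section

abbrev E2 := EuclideanSpace ℝ (Fin 2)

def uvec (θ : ℝ) : E2 := WithLp.toLp 2 ![Real.cos θ, Real.sin θ]
def rotvec (θ : ℝ) : E2 := WithLp.toLp 2 ![Real.sin θ, -Real.cos θ]

def IsConvexBody (C : Set E2) : Prop :=
  IsCompact C ∧ Convex ℝ C ∧ (interior C).Nonempty

/-- `n θ` is the touching point of the supporting line of `C` with inward normal `uvec θ`. -/
def IsNormalSel (C : Set E2) (n : ℝ → E2) : Prop :=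
  ∀ θ, n θ ∈ C ∧ ∀ y ∈ C, (inner ℝ (n θ) (uvec θ) : ℝ) ≤ inner ℝ y (uvec θ)

/-- pseudodistance computed from normal selections of the two bodies. -/
def pdistN (n₁ n₂ : ℝ → E2) : ℝ :=
  (1/2) * ∫ θ in (0:ℝ)..(2*π), |(inner ℝ (n₁ θ - n₂ θ) (rotvec θ) : ℝ)|

/-- distance from a point to the normal line of a body with normal selection `n`. -/
def pdistP (v : E2) (n : ℝ → E2) : ℝ :=
  (1/2) * ∫ θ in (0:ℝ)..(2*π), |(inner ℝ (v - n θ) (rotvec θ) : ℝ)|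

def hsup (C : Set E2) (θ : ℝ) : ℝ := sSup ((fun x => (inner ℝ x (rotvec θ) : ℝ)) '' C)
def hinf (C : Set E2) (θ : ℝ) : ℝ := sInf ((fun x => (inner ℝ x (rotvec θ) : ℝ)) '' C)

def pperN (C : Set E2) (n : ℝ → E2) : ℝ :=
  (1/2) * ∫ θ in (0:ℝ)..(2*π),
    (|hsup C θ - (inner ℝ (n θ) (rotvec θ) : ℝ)| + |hinf C θ - (inner ℝ (n θ) (rotvec θ) : ℝ)|)

def ConstantWidth (D : Set E2) (w : ℝ) : Prop :=
  ∀ d : E2, ‖d‖ = 1 →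
    sSup ((fun x => (inner ℝ x d : ℝ)) '' D) - sInf ((fun x => (inner ℝ x d : ℝ)) '' D) = w

end

noncomputable section

open RealInnerProductSpace

section AuxVec

lemma inner_apply2 (x y : E2) : ⟪x, y⟫ = x 0 * y 0 + x 1 * y 1 := by
  simp [PiLp.inner_apply, Fin.sum_univ_two, RCLike.inner_apply, conj_trivial]; ring

lemma inner_uvec (x : E2) (θ : ℝ) : ⟪x, uvec θ⟫ = x 0 * Real.cos θ + x 1 * Real.sin θ := by
  simp [inner_apply2, uvec]

lemma inner_rotvec (x : E2) (θ : ℝ) : ⟪x, rotvec θ⟫ = x 0 * Real.sin θ - x 1 * Real.cos θ := by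
  simp [inner_apply2, rotvec]; ring

lemma norm_uvec (θ : ℝ) : ‖uvec θ‖ = 1 := by
  have h : ⟪uvec θ, uvec θ⟫ = 1 := by
    rw [inner_uvec]
    have h0 : uvec θ 0 = Real.cos θ := rfl
    have h1 : uvec θ 1 = Real.sin θ := rfl
    rw [h0, h1]
    nlinarith [Real.sin_sq_add_cos_sq θ]
  rw [norm_eq_sqrt_real_inner, h, Real.sqrt_one]

lemma uvec_pi (θ : ℝ) : uvec (θ + π) = -uvec θ := by
  ext i
  fin_cases i <;> simp [uvec, Real.cos_add, Real.sin_add]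

lemma rotvec_pi (θ : ℝ) : rotvec (θ + π) = -rotvec θ := by
  ext i
  fin_cases i <;> simp [rotvec, Real.cos_add, Real.sin_add]

lemma inner_uvec_rotvec (θ : ℝ) : ⟪uvec θ, rotvec θ⟫ = 0 := by
  rw [inner_rotvec]
  have h0 : uvec θ 0 = Real.cos θ := rfl
  have h1 : uvec θ 1 = Real.sin θ := rfl
  rw [h0, h1]; ring

lemma continuous_uvec : Continuous uvec := by
  have h : Continuous fun θ : ℝ => (![Real.cos θ, Real.sin θ] : Fin 2 → ℝ) := by
    refine continuous_pi fun i => ?_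
    fin_cases i
    · simpa using Real.continuous_cos
    · simpa using Real.continuous_sin
  exact (PiLp.continuous_toLp 2 fun _ : Fin 2 => ℝ).comp h

lemma continuous_rotvec : Continuous rotvec := by
  have h : Continuous fun θ : ℝ => (![Real.sin θ, -Real.cos θ] : Fin 2 → ℝ) := by
    refine continuous_pi fun i => ?_
    fin_cases i
    · simpa using Real.continuous_sin
    · show Continuous fun θ : ℝ => -Real.cos θ
      exact Real.continuous_cos.neg
  exact (PiLp.continuous_toLp 2 fun _ : Fin 2 => ℝ).comp h

lemma abs_cos_sub_cos_le' (a b : ℝ) : |Real.cos a - Real.cos b| ≤ |a - b| := by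
  rw [Real.cos_sub_cos, abs_mul, abs_mul, abs_neg]
  have h1 : |Real.sin ((a + b) / 2)| ≤ 1 := Real.abs_sin_le_one _
  have h2 : |Real.sin ((a - b) / 2)| ≤ |(a - b) / 2| := Real.abs_sin_le_abs
  have h3 : |(a - b) / 2| = |a - b| / 2 := by rw [abs_div]; norm_num
  calc |2| * |Real.sin ((a + b) / 2)| * |Real.sin ((a - b) / 2)|
      ≤ |2| * 1 * (|a - b| / 2) := by
        apply mul_le_mul _ (h3 ▸ h2) (abs_nonneg _) (by positivity)
        exact mul_le_mul_of_nonneg_left h1 (abs_nonneg _)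
    _ = |a - b| := by rw [abs_two]; ring

lemma abs_sin_sub_sin_le' (a b : ℝ) : |Real.sin a - Real.sin b| ≤ |a - b| := by
  rw [Real.sin_sub_sin, abs_mul, abs_mul]
  have h1 : |Real.cos ((a + b) / 2)| ≤ 1 := Real.abs_cos_le_one _
  have h2 : |Real.sin ((a - b) / 2)| ≤ |(a - b) / 2| := Real.abs_sin_le_abs
  have h3 : |(a - b) / 2| = |a - b| / 2 := by rw [abs_div]; norm_num
  calc |2| * |Real.sin ((a - b) / 2)| * |Real.cos ((a + b) / 2)|
      ≤ |2| * (|a - b| / 2) * 1 := by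
        apply mul_le_mul _ h1 (abs_nonneg _) (by positivity)
        exact mul_le_mul_of_nonneg_left (h3 ▸ h2) (abs_nonneg _)
    _ = |a - b| := by rw [abs_two]; ring

lemma uvec_lip (a b : ℝ) : ‖uvec a - uvec b‖ ≤ 2 * |a - b| := by
  have hcos := abs_cos_sub_cos_le' a b
  have hsin := abs_sin_sub_sin_le' a b
  have h0 : (uvec a - uvec b) 0 = Real.cos a - Real.cos b := rfl
  have h1 : (uvec a - uvec b) 1 = Real.sin a - Real.sin b := rfl
  rw [EuclideanSpace.norm_eq, Fin.sum_univ_two, h0, h1]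
  rw [show (2 : ℝ) * |a - b| = Real.sqrt ((2 * |a - b|) ^ 2) by
    rw [Real.sqrt_sq (by positivity)]]
  apply Real.sqrt_le_sqrt
  rw [Real.norm_eq_abs, Real.norm_eq_abs]
  nlinarith [abs_nonneg (Real.cos a - Real.cos b), abs_nonneg (Real.sin a - Real.sin b),
    abs_nonneg (a - b), sq_abs (Real.cos a - Real.cos b), sq_abs (Real.sin a - Real.sin b)]

lemma exists_angle (e : E2) (he : ‖e‖ = 1) : ∃ θ : ℝ, uvec θ = e := by
  have hsq : e 0 ^ 2 + e 1 ^ 2 = 1 := by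
    have h := real_inner_self_eq_norm_sq e
    rw [inner_apply2, he] at h
    nlinarith [h]
  have h0 : -1 ≤ e 0 := by nlinarith [sq_nonneg (e 1)]
  have h0' : e 0 ≤ 1 := by nlinarith [sq_nonneg (e 1)]
  rcases le_or_gt 0 (e 1) with h1 | h1
  · refine ⟨Real.arccos (e 0), PiLp.ext fun i => ?_⟩
    fin_cases i
    · show Real.cos (Real.arccos (e 0)) = e 0
      exact Real.cos_arccos h0 h0'
    · show Real.sin (Real.arccos (e 0)) = e 1
      rw [Real.sin_arccos, show (1 : ℝ) - e 0 ^ 2 = e 1 ^ 2 by linarith, Real.sqrt_sq h1]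
  · refine ⟨-Real.arccos (e 0), PiLp.ext fun i => ?_⟩
    fin_cases i
    · show Real.cos (-Real.arccos (e 0)) = e 0
      rw [Real.cos_neg]; exact Real.cos_arccos h0 h0'
    · show Real.sin (-Real.arccos (e 0)) = e 1
      rw [Real.sin_neg, Real.sin_arccos, show (1 : ℝ) - e 0 ^ 2 = e 1 ^ 2 by linarith,
        Real.sqrt_sq_eq_abs, abs_of_neg h1, neg_neg]

end AuxVec

theorem pdist_of_outside_point (D : Set E2) (hD : IsConvexBody D)
    (w : ℝ) (hw : ConstantWidth D w)
    (n : ℝ → E2) (hn : IsNormalSel D n)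
    (v : E2) (hv : v ∉ D) :
    Metric.diam D < ∫ θ in (0:ℝ)..π, |(inner ℝ (v - n θ) (rotvec θ) : ℝ)| := by
  obtain ⟨hcomp, hconv, hint⟩ := hD
  have hne : D.Nonempty := ⟨n 0, (hn 0).1⟩
  -- boundedness of linear images
  have hcf : ∀ d : E2, Continuous fun x : E2 => ⟪x, d⟫ := fun d =>
    continuous_id.inner continuous_const
  have hcim : ∀ d : E2, IsCompact ((fun x => ⟪x, d⟫) '' D) := fun d =>
    hcomp.image (hcf d)
  -- w ≥ 0
  have hw0 : 0 ≤ w := by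
    obtain ⟨zmax, hzmaxD, hzmax⟩ := hcomp.exists_isMaxOn hne ((hcf (uvec 0)).continuousOn)
    obtain ⟨zmin, hzminD, hzmin⟩ := hcomp.exists_isMinOn hne ((hcf (uvec 0)).continuousOn)
    have hs : sSup ((fun x => ⟪x, uvec 0⟫) '' D) = ⟪zmax, uvec 0⟫ :=
      IsGreatest.csSup_eq ⟨⟨zmax, hzmaxD, rfl⟩, by rintro r ⟨y, hy, rfl⟩; exact hzmax hy⟩
    have hi : sInf ((fun x => ⟪x, uvec 0⟫) '' D) = ⟪zmin, uvec 0⟫ :=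
      IsLeast.csInf_eq ⟨⟨zmin, hzminD, rfl⟩, by rintro r ⟨y, hy, rfl⟩; exact hzmin hy⟩
    have := hw (uvec 0) (norm_uvec 0)
    rw [hs, hi] at this
    have h2 : ⟪zmin, uvec 0⟫ ≤ ⟪zmax, uvec 0⟫ := hzmin hzmaxD
    linarith [this, h2]
  -- diam D = w
  have hdiam : Metric.diam D = w := by
    apply le_antisymm
    · apply Metric.diam_le_of_forall_dist_le hw0
      intro p hp q hq
      rcases eq_or_ne p q with rfl | hpq
      · simpa using hw0
      have hnorm : ‖p - q‖ ≠ 0 := by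
        simp [sub_eq_zero, hpq]
      set e : E2 := ‖p - q‖⁻¹ • (p - q) with he_def
      have he : ‖e‖ = 1 := by
        rw [he_def, norm_smul, norm_inv, norm_norm, inv_mul_cancel₀ hnorm]
      have h1 : ⟪p, e⟫ ≤ sSup ((fun x => ⟪x, e⟫) '' D) :=
        le_csSup (hcim e).bddAbove ⟨p, hp, rfl⟩
      have h2 : sInf ((fun x => ⟪x, e⟫) '' D) ≤ ⟪q, e⟫ :=
        csInf_le (hcim e).bddBelow ⟨q, hq, rfl⟩
      have h3 := hw e he
      have h4 : ⟪p - q, e⟫ = ‖p - q‖ := by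
        rw [he_def, real_inner_smul_right, real_inner_self_eq_norm_sq]
        field_simp
      rw [dist_eq_norm, ← h4, inner_sub_left]
      linarith
    · obtain ⟨zmax, hzmaxD, hzmax⟩ := hcomp.exists_isMaxOn hne ((hcf (uvec 0)).continuousOn)
      obtain ⟨zmin, hzminD, hzmin⟩ := hcomp.exists_isMinOn hne ((hcf (uvec 0)).continuousOn)
      have hs : sSup ((fun x => ⟪x, uvec 0⟫) '' D) = ⟪zmax, uvec 0⟫ :=
        IsGreatest.csSup_eq ⟨⟨zmax, hzmaxD, rfl⟩, by rintro r ⟨y, hy, rfl⟩; exact hzmax hy⟩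
      have hi : sInf ((fun x => ⟪x, uvec 0⟫) '' D) = ⟪zmin, uvec 0⟫ :=
        IsLeast.csInf_eq ⟨⟨zmin, hzminD, rfl⟩, by rintro r ⟨y, hy, rfl⟩; exact hzmin hy⟩
      have h3 := hw (uvec 0) (norm_uvec 0)
      rw [hs, hi] at h3
      have h4 : w ≤ ‖zmax - zmin‖ := by
        have := real_inner_le_norm (zmax - zmin) (uvec 0)
        rw [norm_uvec, mul_one, inner_sub_left] at this
        linarith
      calc w ≤ ‖zmax - zmin‖ := h4
        _ = dist zmax zmin := (dist_eq_norm _ _).symm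
        _ ≤ Metric.diam D := Metric.dist_le_diam_of_mem hcomp.isBounded hzmaxD hzminD
  -- key rigidity lemma
  have key : ∀ θ : ℝ, ∀ x ∈ D, (∀ y ∈ D, ⟪x, uvec θ⟫ ≤ ⟪y, uvec θ⟫) →
      n (θ + π) - x = w • uvec θ := by
    intro θ x hxD hxmin
    have hzD := (hn (θ + π)).1
    have hzmax : ∀ y ∈ D, ⟪y, uvec θ⟫ ≤ ⟪n (θ + π), uvec θ⟫ := by
      intro y hy
      have h := (hn (θ + π)).2 y hy
      rw [uvec_pi] at h
      simp only [inner_neg_right] at h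
      linarith
    have hs : sSup ((fun x => ⟪x, uvec θ⟫) '' D) = ⟪n (θ + π), uvec θ⟫ :=
      IsGreatest.csSup_eq ⟨⟨_, hzD, rfl⟩, by rintro r ⟨y, hy, rfl⟩; exact hzmax y hy⟩
    have hi : sInf ((fun x => ⟪x, uvec θ⟫) '' D) = ⟪x, uvec θ⟫ :=
      IsLeast.csInf_eq ⟨⟨x, hxD, rfl⟩, by rintro r ⟨y, hy, rfl⟩; exact hxmin y hy⟩
    have hwθ := hw (uvec θ) (norm_uvec θ)
    rw [hs, hi] at hwθ
    have hzx : ⟪n (θ + π) - x, uvec θ⟫ = w := by rw [inner_sub_left]; linarith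
    have hnorm : ‖n (θ + π) - x‖ ≤ w := by
      have h := Metric.dist_le_diam_of_mem hcomp.isBounded hzD hxD
      rw [hdiam, dist_eq_norm] at h
      exact h
    have hsq : ‖n (θ + π) - x - w • uvec θ‖ ^ 2 ≤ 0 := by
      rw [norm_sub_sq_real, real_inner_smul_right, hzx, norm_smul, norm_uvec,
        Real.norm_eq_abs, abs_of_nonneg hw0]
      nlinarith [hnorm, norm_nonneg (n (θ + π) - x)]
    have hz : ‖n (θ + π) - x - w • uvec θ‖ = 0 := by
      nlinarith [norm_nonneg (n (θ + π) - x - w • uvec θ), hsq]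
    have := norm_eq_zero.mp hz
    rw [sub_eq_zero] at this
    exact this
  have hnpi : ∀ θ : ℝ, n (θ + π) = n θ + w • uvec θ := by
    intro θ
    have h := key θ (n θ) (hn θ).1 (hn θ).2
    rw [sub_eq_iff_eq_add] at h
    rw [h]; abel
  have huniq : ∀ θ : ℝ, ∀ x ∈ D, (∀ y ∈ D, ⟪x, uvec θ⟫ ≤ ⟪y, uvec θ⟫) → x = n θ := by
    intro θ x hx hmin
    have h1 := key θ x hx hmin
    have h2 := key θ (n θ) (hn θ).1 (hn θ).2
    have h3 : n (θ + π) - x = n (θ + π) - n θ := h1.trans h2.symm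
    exact sub_right_injective h3
  -- continuity of the normal selection
  have hcont : Continuous n := by
    rw [continuous_iff_seqContinuous]
    intro x a hx
    apply Filter.tendsto_of_subseq_tendsto
    intro ns hns
    obtain ⟨p, hpD, φ, hφ, hpconv⟩ :=
      hcomp.tendsto_subseq (x := fun k => n (x (ns k))) (fun k => (hn _).1)
    refine ⟨φ, ?_⟩
    have hta : Filter.Tendsto (fun j => x (ns (φ j))) Filter.atTop (nhds a) :=
      hx.comp (hns.comp hφ.tendsto_atTop)
    have hpmin : ∀ y ∈ D, ⟪p, uvec a⟫ ≤ ⟪y, uvec a⟫ := by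
      intro y hy
      have t1 : Filter.Tendsto (fun j => ⟪n (x (ns (φ j))), uvec (x (ns (φ j)))⟫)
          Filter.atTop (nhds ⟪p, uvec a⟫) :=
        hpconv.inner ((continuous_uvec.tendsto a).comp hta)
      have t2 : Filter.Tendsto (fun j => ⟪y, uvec (x (ns (φ j)))⟫)
          Filter.atTop (nhds ⟪y, uvec a⟫) :=
        tendsto_const_nhds.inner ((continuous_uvec.tendsto a).comp hta)
      exact le_of_tendsto_of_tendsto' t1 t2 fun j => (hn _).2 y hy
    have hpn : p = n a := huniq a p hpD hpmin
    rw [hpn] at hpconv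
    exact hpconv
  -- derivative of the support-type functions
  have hderiv_inner : ∀ (c : E2) (θ : ℝ),
      HasDerivAt (fun φ => ⟪c, uvec φ⟫) (-⟪c, rotvec θ⟫) θ := by
    intro c θ
    have h1 : HasDerivAt (fun φ : ℝ => c 0 * Real.cos φ + c 1 * Real.sin φ)
        (c 0 * (-Real.sin θ) + c 1 * Real.cos θ) θ :=
      ((Real.hasDerivAt_cos θ).const_mul (c 0)).add ((Real.hasDerivAt_sin θ).const_mul (c 1))
    have heq : (fun φ => ⟪c, uvec φ⟫) = fun φ => c 0 * Real.cos φ + c 1 * Real.sin φ :=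
      funext fun φ => inner_uvec c φ
    rw [heq, inner_rotvec]
    convert h1 using 1
    ring
  have hm : ∀ θ : ℝ, HasDerivAt (fun φ => ⟪n φ, uvec φ⟫) (-⟪n θ, rotvec θ⟫) θ := by
    intro θ
    have hq : HasDerivAt (fun φ => ⟪n φ - n θ, uvec φ⟫) 0 θ := by
      rw [hasDerivAt_iff_tendsto_slope]
      have hb : ∀ᶠ φ in nhdsWithin θ {θ}ᶜ,
          ‖slope (fun φ => ⟪n φ - n θ, uvec φ⟫) θ φ‖ ≤ 2 * ‖n φ - n θ‖ := by
        filter_upwards [self_mem_nhdsWithin] with φ hφ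
        have hφne : φ ≠ θ := hφ
        have hq0 : ⟪n θ - n θ, uvec θ⟫ = (0 : ℝ) := by simp
        have hub : ⟪n φ - n θ, uvec φ⟫ ≤ 0 := by
          have h := (hn φ).2 (n θ) (hn θ).1
          rw [inner_sub_left]; linarith
        have hlb : ⟪n φ - n θ, uvec φ - uvec θ⟫ ≤ ⟪n φ - n θ, uvec φ⟫ := by
          have h3 := (hn θ).2 (n φ) (hn φ).1
          have h4 : (0 : ℝ) ≤ ⟪n φ - n θ, uvec θ⟫ := by rw [inner_sub_left]; linarith
          rw [inner_sub_right]; linarith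
        have hcs : |⟪n φ - n θ, uvec φ - uvec θ⟫| ≤ ‖n φ - n θ‖ * (2 * |φ - θ|) := by
          refine (abs_real_inner_le_norm _ _).trans ?_
          exact mul_le_mul_of_nonneg_left (uvec_lip φ θ) (norm_nonneg _)
        have habs : |⟪n φ - n θ, uvec φ⟫| ≤ ‖n φ - n θ‖ * (2 * |φ - θ|) := by
          rw [abs_le]
          constructor
          · have := (abs_le.mp hcs).1
            linarith
          · have hnn : (0 : ℝ) ≤ ‖n φ - n θ‖ * (2 * |φ - θ|) := by positivity
            linarith
        have hslope : slope (fun φ => ⟪n φ - n θ, uvec φ⟫) θ φ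
            = ⟪n φ - n θ, uvec φ⟫ / (φ - θ) := by
          rw [slope_def_field, hq0, sub_zero]
        rw [hslope, Real.norm_eq_abs, abs_div]
        rw [div_le_iff₀ (abs_pos.mpr (sub_ne_zero.mpr hφne))]
        calc |⟪n φ - n θ, uvec φ⟫| ≤ ‖n φ - n θ‖ * (2 * |φ - θ|) := habs
          _ = 2 * ‖n φ - n θ‖ * |φ - θ| := by ring
      have hlim : Filter.Tendsto (fun φ => 2 * ‖n φ - n θ‖) (nhdsWithin θ {θ}ᶜ) (nhds 0) := by
        have h1 : Filter.Tendsto (fun φ => 2 * ‖n φ - n θ‖) (nhds θ)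
            (nhds (2 * ‖n θ - n θ‖)) :=
          (continuous_const.mul ((hcont.sub continuous_const).norm)).tendsto θ
        have h2 : (2 : ℝ) * ‖n θ - n θ‖ = 0 := by simp
        rw [h2] at h1
        exact h1.mono_left nhdsWithin_le_nhds
      exact squeeze_zero_norm' hb hlim
    have hsum : HasDerivAt (fun φ => ⟪n φ - n θ, uvec φ⟫ + ⟪n θ, uvec φ⟫) _ θ :=
      hq.add (hderiv_inner (n θ) θ)
    have heq2 : (fun φ => ⟪n φ - n θ, uvec φ⟫ + ⟪n θ, uvec φ⟫) = fun φ => ⟪n φ, uvec φ⟫ := by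
      funext φ
      rw [inner_sub_left]; ring
    rw [heq2, zero_add] at hsum
    exact hsum
  have hF : ∀ θ : ℝ, HasDerivAt (fun φ => ⟪n φ - v, uvec φ⟫)
      ((inner ℝ (v - n θ) (rotvec θ) : ℝ)) θ := by
    intro θ
    have h : HasDerivAt (fun φ => ⟪n φ, uvec φ⟫ - ⟪v, uvec φ⟫) _ θ :=
      (hm θ).sub (hderiv_inner v θ)
    have he : (fun φ => ⟪n φ, uvec φ⟫ - ⟪v, uvec φ⟫) = fun φ => ⟪n φ - v, uvec φ⟫ :=
      funext fun φ => (inner_sub_left _ _ _).symm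
    rw [he] at h
    convert h using 1
    rw [inner_sub_left]
    ring
  -- continuity of the integrand
  have hgc : Continuous fun θ => (inner ℝ (v - n θ) (rotvec θ) : ℝ) :=
    (continuous_const.sub hcont).inner continuous_rotvec
  -- the separating direction
  obtain ⟨p, hpD, hpmin⟩ := hcomp.exists_isMinOn hne
    (f := fun x : E2 => dist v x) ((continuous_const.dist continuous_id).continuousOn)
  have hvp : (0 : ℝ) < ‖p - v‖ := by
    rw [norm_sub_pos_iff]
    intro h
    exact hv (h ▸ hpD)
  have hobt : ∀ y ∈ D, ⟪v - p, y - p⟫ ≤ 0 := by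
    intro y hy
    by_contra hc
    push_neg at hc
    have hyp : y ≠ p := by
      intro h
      rw [h] at hc
      simp at hc
    have hyp0 : (0 : ℝ) < ‖y - p‖ ^ 2 := by
      have : ‖y - p‖ ≠ 0 := by simp [sub_eq_zero, hyp]
      positivity
    set c : ℝ := ⟪v - p, y - p⟫ with hc_def
    set t : ℝ := min 1 (c / ‖y - p‖ ^ 2) with ht_def
    have ht0 : 0 < t := lt_min one_pos (div_pos hc hyp0)
    have ht1 : t ≤ 1 := min_le_left _ _
    have hmem : p + t • (y - p) ∈ D := hconv.add_smul_sub_mem hpD hy ⟨ht0.le, ht1⟩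
    have hd : dist v p ≤ dist v (p + t • (y - p)) := hpmin hmem
    have h1 : ‖v - p‖ ≤ ‖v - (p + t • (y - p))‖ := by
      simpa [dist_eq_norm] using hd
    have h2 : v - (p + t • (y - p)) = v - p - t • (y - p) := by
      abel
    rw [h2] at h1
    have hsq : ‖v - p‖ ^ 2 ≤ ‖v - p - t • (y - p)‖ ^ 2 :=
      pow_le_pow_left₀ (norm_nonneg _) h1 2
    have hexp : ‖v - p - t • (y - p)‖ ^ 2
        = ‖v - p‖ ^ 2 - 2 * (t * c) + t ^ 2 * ‖y - p‖ ^ 2 := by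
      rw [norm_sub_sq_real, real_inner_smul_right, norm_smul, Real.norm_eq_abs, mul_pow, sq_abs]
    rw [hexp] at hsq
    have htc : t * ‖y - p‖ ^ 2 ≤ c := by
      calc t * ‖y - p‖ ^ 2 ≤ (c / ‖y - p‖ ^ 2) * ‖y - p‖ ^ 2 :=
            mul_le_mul_of_nonneg_right (min_le_right _ _) (sq_nonneg _)
        _ = c := div_mul_cancel₀ _ (ne_of_gt hyp0)
    nlinarith [hsq, htc, ht0, hc]
  set e : E2 := ‖p - v‖⁻¹ • (p - v) with he_def
  have he1 : ‖e‖ = 1 := by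
    rw [he_def, norm_smul, norm_inv, norm_norm, inv_mul_cancel₀ (ne_of_gt hvp)]
  obtain ⟨θ₀, hθ₀⟩ := exists_angle e he1
  have hδsep : ∀ y ∈ D, ‖p - v‖ ≤ ⟪y - v, uvec θ₀⟫ := by
    intro y hy
    rw [hθ₀, he_def, real_inner_smul_right]
    have h1 : (0 : ℝ) ≤ ⟪y - p, p - v⟫ := by
      have h := hobt y hy
      have h2 : ⟪y - p, p - v⟫ = -⟪v - p, y - p⟫ := by
        rw [show p - v = -(v - p) by abel, inner_neg_right, real_inner_comm]
      rw [h2]; linarith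
    have h2 : ⟪y - v, p - v⟫ = ⟪y - p, p - v⟫ + ‖p - v‖ ^ 2 := by
      rw [show y - v = (y - p) + (p - v) by abel, inner_add_left, real_inner_self_eq_norm_sq]
    calc ‖p - v‖ = ‖p - v‖⁻¹ * ‖p - v‖ ^ 2 := by
          field_simp
        _ ≤ ‖p - v‖⁻¹ * ⟪y - v, p - v⟫ := by
          apply mul_le_mul_of_nonneg_left _ (by positivity)
          rw [h2]; linarith
  set δ : ℝ := ⟪n θ₀ - v, uvec θ₀⟫ with hδ_def
  have hδpos : (0 : ℝ) < δ := lt_of_lt_of_le hvp (hδsep (n θ₀) (hn θ₀).1)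
  -- FTC computation
  have hFTC : ∫ θ in θ₀..(θ₀ + π), (inner ℝ (v - n θ) (rotvec θ) : ℝ)
      = ⟪n (θ₀ + π) - v, uvec (θ₀ + π)⟫ - ⟪n θ₀ - v, uvec θ₀⟫ :=
    intervalIntegral.integral_eq_sub_of_hasDerivAt (fun θ _ => hF θ)
      (hgc.intervalIntegrable _ _)
  have hval : ⟪n (θ₀ + π) - v, uvec (θ₀ + π)⟫ = -⟪n θ₀ - v, uvec θ₀⟫ - w := by
    rw [hnpi, uvec_pi, inner_neg_right,
      show n θ₀ + w • uvec θ₀ - v = (n θ₀ - v) + w • uvec θ₀ by abel,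
      inner_add_left, real_inner_smul_left, real_inner_self_eq_norm_sq, norm_uvec]
    ring
  have hintval : ∫ θ in θ₀..(θ₀ + π), (inner ℝ (v - n θ) (rotvec θ) : ℝ) = -(w + 2 * δ) := by
    rw [hFTC, hval, hδ_def]; ring
  -- periodicity and shifting the interval
  have hper : Function.Periodic (fun θ => |(inner ℝ (v - n θ) (rotvec θ) : ℝ)|) π := by
    intro θ
    have hg : (inner ℝ (v - n (θ + π)) (rotvec (θ + π)) : ℝ)
        = -(inner ℝ (v - n θ) (rotvec θ) : ℝ) := by
      rw [hnpi θ, rotvec_pi, inner_neg_right,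
        show v - (n θ + w • uvec θ) = (v - n θ) - w • uvec θ by abel,
        inner_sub_left, real_inner_smul_left, inner_uvec_rotvec]
      ring
    simp only [hg, abs_neg]
  have hshift : ∫ θ in (0:ℝ)..π, |(inner ℝ (v - n θ) (rotvec θ) : ℝ)|
      = ∫ θ in θ₀..(θ₀ + π), |(inner ℝ (v - n θ) (rotvec θ) : ℝ)| := by
    have h := hper.intervalIntegral_add_eq 0 θ₀
    simpa using h
  have hle : |∫ θ in θ₀..(θ₀ + π), (inner ℝ (v - n θ) (rotvec θ) : ℝ)|
      ≤ ∫ θ in θ₀..(θ₀ + π), |(inner ℝ (v - n θ) (rotvec θ) : ℝ)| :=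
    intervalIntegral.abs_integral_le_integral_abs (by linarith [Real.pi_pos])
  have hfinal : w + 2 * δ ≤ ∫ θ in θ₀..(θ₀ + π), |(inner ℝ (v - n θ) (rotvec θ) : ℝ)| := by
    rw [hintval] at hle
    rw [abs_neg, abs_of_nonneg (by linarith)] at hle
    exact hle
  rw [hdiam, hshift]
  linarith

end
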